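/- The identity element is unique up to identity of game trees: if a scoring play game G is not identical to 0 = {.|0|.}, then G ≠ 0, i.e., there exists a game X such that G +_ℓ X and X have different outcomes. -/
import Mathlib


inductive SGame : Type where
  | mk (left right : List SGame) (score : ℝ)

namespace SGame

def leftOpts : SGame → List SGame | mk L _ _ => L
def rightOpts : SGame → List SGame | mk _ R _ => R
def score : SGame → ℝ | mk _ _ s => s

mutual
  /-- Optimal final score when Left moves first. -/
  def leftScore : SGame → ℝ
    | mk [] _ s => s
    | mk (g :: L) _ _ => maxRight g L
  termination_by G => sizeOf G
  decreasing_by all_goals (simp; try omega)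
  def maxRight : SGame → List SGame → ℝ
    | g, [] => rightScore g
    | g, h :: t => max (rightScore g) (maxRight h t)
  termination_by g l => 1 + sizeOf g + sizeOf l
  decreasing_by all_goals (simp; try omega)
  /-- Optimal final score when Right moves first. -/
  def rightScore : SGame → ℝ
    | mk _ [] s => s
    | mk _ (g :: R) _ => minLeft g R
  termination_by G => sizeOf G
  decreasing_by all_goals (simp; try omega)
  def minLeft : SGame → List SGame → ℝ
    | g, [] => leftScore g
    | g, h :: t => min (leftScore g) (minLeft h t)
  termination_by g l => 1 + sizeOf g + sizeOf l
  decreasing_by all_goals (simp; try omega)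
end

/-- Long-rule disjunctive sum. -/
def sum : SGame → SGame → SGame
  | mk L1 R1 s1, mk L2 R2 s2 =>
    mk ((L1.attach.map fun g => sum g.1 (mk L2 R2 s2)) ++
        (L2.attach.map fun h => sum (mk L1 R1 s1) h.1))
       ((R1.attach.map fun g => sum g.1 (mk L2 R2 s2)) ++
        (R2.attach.map fun h => sum (mk L1 R1 s1) h.1))
       (s1 + s2)
termination_by G H => sizeOf G + sizeOf H
decreasing_by
  all_goals simp
  · have := List.sizeOf_lt_of_mem g.2; omega
  · have := List.sizeOf_lt_of_mem h.2; omega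
  · have := List.sizeOf_lt_of_mem g.2; omega
  · have := List.sizeOf_lt_of_mem h.2; omega

end SGame

namespace SGame

/-- The game `{.|0|.}`. -/
def zero : SGame := mk [] [] 0

/-- Negation: `-G = {-G^R | -G^S | -G^L}`. -/
def neg : SGame → SGame
  | mk L R s =>
    mk (R.attach.map fun g => neg g.1) (L.attach.map fun g => neg g.1) (-s)
termination_by G => sizeOf G
decreasing_by
  all_goals (have := List.sizeOf_lt_of_mem g.2; simp; omega)

/-- Identity of game trees (options regarded as sets). -/
def Ident : SGame → SGame → Prop
  | mk L1 R1 s1, mk L2 R2 s2 =>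
    s1 = s2 ∧
    (∀ g ∈ L1.attach, ∃ h ∈ L2.attach, Ident g.1 h.1) ∧
    (∀ h ∈ L2.attach, ∃ g ∈ L1.attach, Ident g.1 h.1) ∧
    (∀ g ∈ R1.attach, ∃ h ∈ R2.attach, Ident g.1 h.1) ∧
    (∀ h ∈ R2.attach, ∃ g ∈ R1.attach, Ident g.1 h.1)
termination_by G H => sizeOf G + sizeOf H
decreasing_by
  all_goals
    (have := List.sizeOf_lt_of_mem g.2; have := List.sizeOf_lt_of_mem h.2
     simp; omega)

inductive Outcome : Type where
  | L | R | N | P | T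
deriving DecidableEq

/-- The outcome class of a game, determined by the signs of its final scores. -/
noncomputable def outcome (G : SGame) : Outcome :=
  if 0 < G.leftScore then
    (if 0 < G.rightScore then .L else if G.rightScore = 0 then .L else .N)
  else if G.leftScore = 0 then
    (if 0 < G.rightScore then .L else if G.rightScore = 0 then .T else .R)
  else
    (if 0 < G.rightScore then .P else .R)

/-- `G ≥ H`. -/
def Ge (G H : SGame) : Prop :=
  ∀ X : SGame,
    (0 ≤ (H.sum X).leftScore → 0 ≤ (G.sum X).leftScore) ∧
    (0 ≤ (H.sum X).rightScore → 0 ≤ (G.sum X).rightScore) ∧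
    (0 < (H.sum X).leftScore → 0 < (G.sum X).leftScore) ∧
    (0 < (H.sum X).rightScore → 0 < (G.sum X).rightScore)

/-- `G ≤ H`. -/
def Le (G H : SGame) : Prop :=
  ∀ X : SGame,
    ((H.sum X).leftScore ≤ 0 → (G.sum X).leftScore ≤ 0) ∧
    ((H.sum X).rightScore ≤ 0 → (G.sum X).rightScore ≤ 0) ∧
    ((H.sum X).leftScore < 0 → (G.sum X).leftScore < 0) ∧
    ((H.sum X).rightScore < 0 → (G.sum X).rightScore < 0)

/-- Game equality: same outcome in every disjunctive-sum context. -/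
def gameEq (G H : SGame) : Prop :=
  ∀ X : SGame, (G.sum X).outcome = (H.sum X).outcome

end SGame

namespace SGame

/-- Every score in the game tree of `G` satisfies `p`. -/
def AllScores (p : ℝ → Prop) : SGame → Prop
  | mk L R s =>
    p s ∧ (∀ g ∈ L.attach, AllScores p g.1) ∧ (∀ g ∈ R.attach, AllScores p g.1)
termination_by G => sizeOf G
decreasing_by all_goals (have := List.sizeOf_lt_of_mem g.2; simp; omega)

/-- `G ≡ H`: identical underlying game trees, with equal scores at all
termination vertices (vertices at which at least one player has no option,
i.e. where the play of some disjunctive sum can end). -/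
def Equiv : SGame → SGame → Prop
  | mk L1 R1 s1, mk L2 R2 s2 =>
    ((L1 = [] ∨ R1 = []) → s1 = s2) ∧
    (∀ g ∈ L1.attach, ∃ h ∈ L2.attach, Equiv g.1 h.1) ∧
    (∀ h ∈ L2.attach, ∃ g ∈ L1.attach, Equiv g.1 h.1) ∧
    (∀ g ∈ R1.attach, ∃ h ∈ R2.attach, Equiv g.1 h.1) ∧
    (∀ h ∈ R2.attach, ∃ g ∈ R1.attach, Equiv g.1 h.1)
termination_by G H => sizeOf G + sizeOf H
decreasing_by
  all_goals
    (have := List.sizeOf_lt_of_mem g.2; have := List.sizeOf_lt_of_mem h.2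
     simp; omega)

/-- `G` is in canonical form: hereditarily, no dominated and no reversible options. -/
def Canonical : SGame → Prop
  | mk L R s =>
    (∀ A ∈ L, ∀ B ∈ L, A ≠ B → ¬ Ge A B) ∧
    (∀ D ∈ R, ∀ E ∈ R, D ≠ E → ¬ Le D E) ∧
    (∀ A ∈ L, ∀ Ar ∈ A.rightOpts, ¬ Le Ar (mk L R s)) ∧
    (∀ D ∈ R, ∀ Dl ∈ D.leftOpts, ¬ Ge Dl (mk L R s)) ∧
    (∀ g ∈ L.attach, Canonical g.1) ∧ (∀ g ∈ R.attach, Canonical g.1)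
termination_by G => sizeOf G
decreasing_by all_goals (have := List.sizeOf_lt_of_mem g.2; simp; omega)

/-- One reduction step: removing a dominated option or bypassing a reversible
option, at the root or in some subposition. -/
inductive Step : SGame → SGame → Prop where
  | domL {L1 L2 : List SGame} {R : List SGame} {s : ℝ} {B : SGame} (A : SGame)
      (hA : A ∈ L1 ++ L2) (h : Ge A B) :
      Step (mk (L1 ++ B :: L2) R s) (mk (L1 ++ L2) R s)
  | domR {R1 R2 : List SGame} {L : List SGame} {s : ℝ} {E : SGame} (D : SGame)
      (hD : D ∈ R1 ++ R2) (h : Le D E) :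
      Step (mk L (R1 ++ E :: R2) s) (mk L (R1 ++ R2) s)
  | revL {L1 L2 : List SGame} {R : List SGame} {s : ℝ} {A Ar : SGame}
      (hAr : Ar ∈ A.rightOpts) (h : Le Ar (mk (L1 ++ A :: L2) R s)) :
      Step (mk (L1 ++ A :: L2) R s) (mk (L1 ++ Ar.leftOpts ++ L2) R s)
  | revR {R1 R2 : List SGame} {L : List SGame} {s : ℝ} {D Dl : SGame}
      (hDl : Dl ∈ D.leftOpts) (h : Ge Dl (mk L (R1 ++ D :: R2) s)) :
      Step (mk L (R1 ++ D :: R2) s) (mk L (R1 ++ Dl.rightOpts ++ R2) s)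
  | congL {g g' : SGame} {L1 L2 R : List SGame} {s : ℝ} (h : Step g g') :
      Step (mk (L1 ++ g :: L2) R s) (mk (L1 ++ g' :: L2) R s)
  | congR {g g' : SGame} {L R1 R2 : List SGame} {s : ℝ} (h : Step g g') :
      Step (mk L (R1 ++ g :: R2) s) (mk L (R1 ++ g' :: R2) s)

end SGame

namespace SGame

/-- A bound on all scores in the tree. -/
def bnd : SGame → ℝ
  | mk L R s => max ((L.attach.map fun g => bnd g.1).foldr max |s|)
                    ((R.attach.map fun g => bnd g.1).foldr max |s|)
termination_by G => sizeOf G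
decreasing_by all_goals (have := List.sizeOf_lt_of_mem g.2; simp; omega)

lemma le_foldr_max_init (l : List ℝ) (i : ℝ) : i ≤ l.foldr max i := by
  induction l with
  | nil => simp
  | cons a t ih => exact le_trans ih (le_max_right _ _)

lemma le_foldr_max_mem {l : List ℝ} {a : ℝ} (h : a ∈ l) (i : ℝ) : a ≤ l.foldr max i := by
  induction l with
  | nil => simp at h
  | cons b t ih =>
    rcases List.mem_cons.1 h with rfl | h
    · exact le_max_left _ _
    · exact le_trans (ih h) (le_max_right _ _)

lemma abs_score_le_bnd (L R : List SGame) (s : ℝ) : |s| ≤ bnd (mk L R s) := by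
  rw [bnd]
  exact le_trans (le_foldr_max_init _ _) (le_max_left _ _)

lemma bnd_left_le {g : SGame} {L R : List SGame} {s : ℝ} (h : g ∈ L) :
    bnd g ≤ bnd (mk L R s) := by
  rw [bnd]
  refine le_trans (le_foldr_max_mem ?_ |s|) (le_max_left _ _)
  exact List.mem_map.2 ⟨⟨g, h⟩, List.mem_attach _ _, rfl⟩

lemma bnd_right_le {g : SGame} {L R : List SGame} {s : ℝ} (h : g ∈ R) :
    bnd g ≤ bnd (mk L R s) := by
  rw [bnd]
  refine le_trans (le_foldr_max_mem ?_ |s|) (le_max_right _ _)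
  exact List.mem_map.2 ⟨⟨g, h⟩, List.mem_attach _ _, rfl⟩

lemma abs_maxRight_le {B : ℝ} (g : SGame) (t : List SGame)
    (h : ∀ x ∈ g :: t, |rightScore x| ≤ B) : |maxRight g t| ≤ B := by
  induction t generalizing g with
  | nil => rw [maxRight]; exact h g (by simp)
  | cons b t ih =>
    rw [maxRight]
    have h1 := h g (by simp)
    have h2 := ih b (fun x hx => h x (List.mem_cons_of_mem _ hx))
    rw [abs_le] at h1 h2 ⊢
    constructor
    · exact le_trans h1.1 (le_trans (le_max_left _ _) le_rfl)
    · exact max_le h1.2 h2.2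

lemma abs_minLeft_le {B : ℝ} (g : SGame) (t : List SGame)
    (h : ∀ x ∈ g :: t, |leftScore x| ≤ B) : |minLeft g t| ≤ B := by
  induction t generalizing g with
  | nil => rw [minLeft]; exact h g (by simp)
  | cons b t ih =>
    rw [minLeft]
    have h1 := h g (by simp)
    have h2 := ih b (fun x hx => h x (List.mem_cons_of_mem _ hx))
    rw [abs_le] at h1 h2 ⊢
    exact ⟨le_min h1.1 h2.1, le_trans (min_le_left _ _) h1.2⟩

lemma abs_scores_le_bnd : ∀ n (G : SGame), sizeOf G ≤ n →
    |G.leftScore| ≤ bnd G ∧ |G.rightScore| ≤ bnd G := by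
  intro n
  induction n with
  | zero => intro G hG; cases G with | mk L R s => simp at hG
  | succ n ih =>
    intro G hG
    cases G with
    | mk L R s =>
      have hL : ∀ x ∈ L, |x.leftScore| ≤ bnd (mk L R s) ∧ |x.rightScore| ≤ bnd (mk L R s) := by
        intro x hx
        have hsz := List.sizeOf_lt_of_mem hx
        have h := ih x (by simp at hG; omega)
        exact ⟨le_trans h.1 (bnd_left_le hx), le_trans h.2 (bnd_left_le hx)⟩
      have hR : ∀ x ∈ R, |x.leftScore| ≤ bnd (mk L R s) ∧ |x.rightScore| ≤ bnd (mk L R s) := by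
        intro x hx
        have hsz := List.sizeOf_lt_of_mem hx
        have h := ih x (by simp at hG; omega)
        exact ⟨le_trans h.1 (bnd_right_le hx), le_trans h.2 (bnd_right_le hx)⟩
      constructor
      · cases L with
        | nil => rw [leftScore]; exact abs_score_le_bnd _ _ _
        | cons g t =>
          rw [leftScore]
          exact abs_maxRight_le g t (fun x hx => (hL x hx).2)
      · cases R with
        | nil => rw [rightScore]; exact abs_score_le_bnd _ _ _
        | cons g t =>
          rw [rightScore]
          exact abs_minLeft_le g t (fun x hx => (hR x hx).1)

lemma abs_leftScore_le (G : SGame) : |G.leftScore| ≤ bnd G :=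
  (abs_scores_le_bnd (sizeOf G) G le_rfl).1

lemma abs_rightScore_le (G : SGame) : |G.rightScore| ≤ bnd G :=
  (abs_scores_le_bnd (sizeOf G) G le_rfl).2

lemma sum_num (L R : List SGame) (s b : ℝ) :
    (mk L R s).sum (mk [] [] b) =
      mk (L.map (·.sum (mk [] [] b))) (R.map (·.sum (mk [] [] b))) (s + b) := by
  rw [sum]; simp [List.attach_map_val]

lemma maxRight_map {f : SGame → SGame} {b : ℝ} (g : SGame) (t : List SGame)
    (h : ∀ x ∈ g :: t, rightScore (f x) = rightScore x + b) :
    maxRight (f g) (t.map f) = maxRight g t + b := by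
  induction t generalizing g with
  | nil => rw [List.map_nil, maxRight, maxRight]; exact h g (by simp)
  | cons c t ih =>
    rw [List.map_cons, maxRight, maxRight, h g (by simp),
      ih c (fun x hx => h x (List.mem_cons_of_mem _ hx)),
      max_add_add_right]

lemma minLeft_map {f : SGame → SGame} {b : ℝ} (g : SGame) (t : List SGame)
    (h : ∀ x ∈ g :: t, leftScore (f x) = leftScore x + b) :
    minLeft (f g) (t.map f) = minLeft g t + b := by
  induction t generalizing g with
  | nil => rw [List.map_nil, minLeft, minLeft]; exact h g (by simp)
  | cons c t ih =>
    rw [List.map_cons, minLeft, minLeft, h g (by simp),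
      ih c (fun x hx => h x (List.mem_cons_of_mem _ hx)),
      min_add_add_right]

lemma shift_scores : ∀ n (G : SGame), sizeOf G ≤ n → ∀ b : ℝ,
    (G.sum (mk [] [] b)).leftScore = G.leftScore + b ∧
    (G.sum (mk [] [] b)).rightScore = G.rightScore + b := by
  intro n
  induction n with
  | zero => intro G hG; cases G with | mk L R s => simp at hG
  | succ n ih =>
    intro G hG b
    cases G with
    | mk L R s =>
      rw [sum_num]
      have hmem : ∀ x ∈ L ++ R,
          (x.sum (mk [] [] b)).leftScore = x.leftScore + b ∧
          (x.sum (mk [] [] b)).rightScore = x.rightScore + b := by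
        intro x hx
        rcases List.mem_append.1 hx with hx | hx <;>
          (have hsz := List.sizeOf_lt_of_mem hx; exact ih x (by simp at hG; omega) b)
      constructor
      · cases L with
        | nil => rw [List.map_nil, leftScore, leftScore]
        | cons g t =>
          rw [List.map_cons, leftScore, leftScore]
          exact maxRight_map g t (fun x hx => (hmem x (List.mem_append.2 (Or.inl hx))).2)
      · cases R with
        | nil => rw [List.map_nil, rightScore, rightScore]
        | cons g t =>
          rw [List.map_cons, rightScore, rightScore]
          exact minLeft_map g t (fun x hx => (hmem x (List.mem_append.2 (Or.inr hx))).1)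

lemma leftScore_shift (G : SGame) (b : ℝ) :
    (G.sum (mk [] [] b)).leftScore = G.leftScore + b :=
  (shift_scores (sizeOf G) G le_rfl b).1

lemma rightScore_shift (G : SGame) (b : ℝ) :
    (G.sum (mk [] [] b)).rightScore = G.rightScore + b :=
  (shift_scores (sizeOf G) G le_rfl b).2

lemma minLeft_le_of_mem {x g : SGame} {t : List SGame} (h : x ∈ g :: t) :
    minLeft g t ≤ leftScore x := by
  induction t generalizing g with
  | nil => rw [minLeft]; simp at h; rw [h]
  | cons c t ih =>
    rw [minLeft]
    rcases List.mem_cons.1 h with rfl | h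
    · exact min_le_left _ _
    · exact le_trans (min_le_right _ _) (ih h)

lemma le_maxRight_of_mem {x g : SGame} {t : List SGame} (h : x ∈ g :: t) :
    rightScore x ≤ maxRight g t := by
  induction t generalizing g with
  | nil => rw [maxRight]; simp at h; rw [h]
  | cons c t ih =>
    rw [maxRight]
    rcases List.mem_cons.1 h with rfl | h
    · exact le_max_left _ _
    · exact le_trans (ih h) (le_max_right _ _)

lemma rightScore_le_of_mem {L R : List SGame} {s : ℝ} {x : SGame} (h : x ∈ R) :
    (mk L R s).rightScore ≤ x.leftScore := by
  cases R with
  | nil => simp at h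
  | cons g t => rw [rightScore]; exact minLeft_le_of_mem h

lemma le_leftScore_of_mem {L R : List SGame} {s : ℝ} {x : SGame} (h : x ∈ L) :
    x.rightScore ≤ (mk L R s).leftScore := by
  cases L with
  | nil => simp at h
  | cons g t => rw [leftScore]; exact le_maxRight_of_mem h

lemma maxRight_neg {g : SGame} {t : List SGame} (h : ∀ x ∈ g :: t, rightScore x < 0) :
    maxRight g t < 0 := by
  induction t generalizing g with
  | nil => rw [maxRight]; exact h g (by simp)
  | cons c t ih =>
    rw [maxRight]
    exact max_lt (h g (by simp))
      (ih (fun x hx => h x (List.mem_cons_of_mem _ hx)))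

lemma minLeft_pos {g : SGame} {t : List SGame} (h : ∀ x ∈ g :: t, 0 < leftScore x) :
    0 < minLeft g t := by
  induction t generalizing g with
  | nil => rw [minLeft]; exact h g (by simp)
  | cons c t ih =>
    rw [minLeft]
    exact lt_min (h g (by simp))
      (ih (fun x hx => h x (List.mem_cons_of_mem _ hx)))

end SGame
namespace SGame

lemma bnd_nonneg (G : SGame) : 0 ≤ bnd G :=
  le_trans (abs_nonneg _) (abs_leftScore_le G)

/-- Moving Right in the `{.|a|b}` component. -/
lemma key1 {y : SGame} {b : ℝ} (a : ℝ) (hb : y.leftScore + b < 0) :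
    (y.sum (mk [] [mk [] [] b] a)).rightScore < 0 := by
  cases y with
  | mk L R s =>
    rw [sum]
    simp only [List.attach_map_val, List.attach_nil, List.map_nil, List.append_nil,
      List.attach_cons, List.map_cons]
    refine lt_of_le_of_lt (rightScore_le_of_mem (x := (mk L R s).sum (mk [] [] b)) (by simp)) ?_
    rw [leftScore_shift]
    exact hb

/-- Moving Left in the `{a|b|.}` component. -/
lemma key2 {y : SGame} {a : ℝ} (b : ℝ) (ha : 0 < y.rightScore + a) :
    0 < (y.sum (mk [mk [] [] a] [] b)).leftScore := by
  cases y with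
  | mk L R s =>
    rw [sum]
    simp only [List.attach_map_val, List.attach_nil, List.map_nil, List.append_nil,
      List.attach_cons, List.map_cons]
    refine lt_of_lt_of_le ?_ (le_leftScore_of_mem (x := (mk L R s).sum (mk [] [] a)) (by simp))
    rw [rightScore_shift]
    exact ha

end SGame

/-- If `G` is not identical (as a game tree) to `0 = {.|0|.}`, then `G ≠ 0`:
some game `X` gives `G +ℓ X` and `X` different outcomes. -/
theorem ne_zero_of_not_ident_zero (G : SGame) (h : ¬ SGame.Ident G SGame.zero) :
    ∃ X : SGame, (G.sum X).outcome ≠ X.outcome := by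
  open SGame in
  cases G with
  | mk L R s =>
    cases L with
    | cons g0 L' =>
      -- Left has a move: X = {.| 1 | b} with b very negative; outcome R vs N.
      set B := bnd (mk (g0 :: L') R s) with hB
      set b : ℝ := -(B + 1) with hb
      have hbneg : b < 0 := by
        have := bnd_nonneg (mk (g0 :: L') R s); rw [hb]; linarith
      refine ⟨mk [] [mk [] [] b] 1, ?_⟩
      -- outcome of X is N
      have hXl : (mk [] [mk [] [] b] 1).leftScore = 1 := by rw [leftScore]
      have hXr : (mk [] [mk [] [] b] 1).rightScore = b := by
        rw [rightScore, minLeft, leftScore]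
      -- scores of G + X are both negative
      have hls : ((mk (g0 :: L') R s).sum (mk [] [mk [] [] b] 1)).leftScore < 0 := by
        rw [sum]
        simp only [List.attach_map_val, List.attach_nil, List.map_nil, List.append_nil,
          List.attach_cons, List.map_cons]
        rw [leftScore]
        apply maxRight_neg
        intro x hx
        have hx' : x ∈ (g0 :: L').map (·.sum (mk [] [mk [] [] b] 1)) := by
          simpa using hx
        obtain ⟨y, hy, rfl⟩ := List.mem_map.1 hx'
        apply key1
        have h1 : y.leftScore ≤ bnd y := le_of_abs_le (abs_leftScore_le y)
        have h2 : bnd y ≤ B := bnd_left_le hy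
        rw [hb]; linarith
      have hrs : ((mk (g0 :: L') R s).sum (mk [] [mk [] [] b] 1)).rightScore < 0 := by
        apply key1
        have h1 : (mk (g0 :: L') R s).leftScore ≤ B :=
          le_of_abs_le (abs_leftScore_le _)
        rw [hb]; linarith
      rw [outcome, outcome, hXl, hXr, if_neg hls.not_gt, if_neg hls.ne,
        if_neg hrs.not_gt, if_pos one_pos, if_neg hbneg.not_gt, if_neg hbneg.ne]
      simp
    | nil =>
      cases R with
      | cons g0 R' =>
        -- Right has a move: X = {a | -1 |.} with a very positive; outcome L vs N.
        set B := bnd (mk [] (g0 :: R') s) with hB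
        set a : ℝ := B + 1 with ha
        have hapos : (0:ℝ) < a := by
          have := bnd_nonneg (mk [] (g0 :: R') s); rw [ha]; linarith
        refine ⟨mk [mk [] [] a] [] (-1), ?_⟩
        have hXl : (mk [mk [] [] a] [] (-1)).leftScore = a := by
          rw [leftScore, maxRight, rightScore]
        have hXr : (mk [mk [] [] a] [] (-1)).rightScore = -1 := by rw [rightScore]
        have hls : 0 < ((mk [] (g0 :: R') s).sum (mk [mk [] [] a] [] (-1))).leftScore := by
          apply key2
          have h1 : -B ≤ (mk [] (g0 :: R') s).rightScore := neg_le_of_abs_le (abs_rightScore_le _)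
          rw [ha]; linarith
        have hrs : 0 < ((mk [] (g0 :: R') s).sum (mk [mk [] [] a] [] (-1))).rightScore := by
          rw [sum]
          simp only [List.attach_map_val, List.attach_nil, List.map_nil, List.append_nil,
            List.attach_cons, List.map_cons]
          rw [rightScore]
          apply minLeft_pos
          intro x hx
          have hx' : x ∈ (g0 :: R').map (·.sum (mk [mk [] [] a] [] (-1))) := by
            simpa using hx
          obtain ⟨y, hy, rfl⟩ := List.mem_map.1 hx'
          apply key2
          have h1 : -bnd y ≤ y.rightScore := neg_le_of_abs_le (abs_rightScore_le y)
          have h2 : bnd y ≤ B := bnd_right_le hy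
          rw [ha]; linarith
        rw [outcome, outcome, hXl, hXr, if_pos hls, if_pos hrs, if_pos hapos,
          if_neg (by norm_num : ¬ (0:ℝ) < -1), if_neg (by norm_num : (-1:ℝ) ≠ 0)]
        decide
      | nil =>
        -- G = {.|s|.} with s ≠ 0; X = 0 distinguishes.
        have hs : s ≠ 0 := by
          intro hs0
          apply h
          rw [zero, Ident]
          simp [hs0]
        refine ⟨zero, ?_⟩
        have hsum : (mk [] [] s).sum zero = mk [] [] s := by
          rw [zero, sum]; simp
        have h1 : (mk [] [] s).leftScore = s := by rw [leftScore]
        have h2 : (mk [] [] s).rightScore = s := by rw [rightScore]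
        have h3 : zero.leftScore = 0 := by rw [zero, leftScore]
        have h4 : zero.rightScore = 0 := by rw [zero, rightScore]
        rw [hsum, outcome, outcome, h1, h2, h3, h4]
        rcases lt_trichotomy s 0 with hneg | rfl | hpos
        · simp only [if_neg hneg.not_gt, if_neg hneg.ne, if_neg (lt_irrefl (0:ℝ)), if_pos rfl]
          decide
        · exact absurd rfl hs
        · simp only [if_pos hpos, if_neg (lt_irrefl (0:ℝ)), if_pos rfl]
          decide
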